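/- Let ν be a probability measure on {0,1}^ℕ given by the product of Bernoulli(p) measures with p ≠ 1/2, and let μ be the Dirac measure concentrated on the sequence x = 0^2 1^{2^2} 0^{2^3} 1^{2^4} ⋯ (blocks of 0's and 1's of doubling lengths). Then E_{μ,ν}(k) = ν(x_0^{k−1}), and liminf_{k→∞} −(1/k) log E_{μ,ν}(k) < limsup_{k→∞} −(1/k) log E_{μ,ν}(k); i.e., the limiting rate R does not exist. -/

import Mathlib

open MeasureTheory Filter
open scoped ENNReal

/-- Cylinder set of a `k`-string. -/
def cyl {χ : Type*} {k : ℕ} (ω : Fin k → χ) : Set (ℕ → χ) := {x | ∀ i : Fin k, x (i : ℕ) = ω i}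

/-- The `k`-divergence between `μ` and `ν`. -/
noncomputable def div2 {χ : Type*} [MeasurableSpace χ] (μ ν : Measure (ℕ → χ)) (k : ℕ) : ℝ≥0∞ :=
  ∑' ω : Fin k → χ, μ (cyl ω) * ν (cyl ω)

/-- The sequence `0^2 1^(2^2) 0^(2^3) 1^(2^4) ⋯` : position `n` lies in the `t`-th block
(of length `2^t`) where `t = Nat.log 2 (n+2)`, and the block symbol is `1` iff `t` is even. -/
def xseq (n : ℕ) : Bool := decide (Nat.log 2 (n + 2) % 2 = 0)

/-! ### Auxiliary counting lemmas -/

/-- Number of ones among the first `k` entries of `xseq`. -/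
def acount (k : ℕ) : ℕ := ((Finset.range k).filter fun n => xseq n = true).card

lemma acount_le (k : ℕ) : acount k ≤ k := by
  simpa [acount] using (Finset.card_filter_le (Finset.range k) _)

lemma xseq_eq {t n : ℕ} (h1 : 2 ^ t ≤ n + 2) (h2 : n + 2 < 2 ^ (t + 1)) :
    xseq n = decide (t % 2 = 0) := by
  unfold xseq
  rw [Nat.log_eq_of_pow_le_of_lt_pow h1 h2]

lemma acount_step (t : ℕ) (ht : 1 ≤ t) :
    acount (2 ^ (t + 1) - 2) = acount (2 ^ t - 2) + if t % 2 = 0 then 2 ^ t else 0 := by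
  have h2t : 2 ≤ 2 ^ t := by
    calc 2 = 2 ^ 1 := rfl
    _ ≤ 2 ^ t := Nat.pow_le_pow_right (by norm_num) ht
  have h2t1 : 2 ^ (t + 1) = 2 * 2 ^ t := by ring
  have hle : 2 ^ t - 2 ≤ 2 ^ (t + 1) - 2 := by
    have := Nat.pow_le_pow_right (show 1 ≤ 2 by norm_num) (Nat.le_succ t)
    omega
  have hval : ∀ n ∈ Finset.Ico (2 ^ t - 2) (2 ^ (t + 1) - 2), xseq n = decide (t % 2 = 0) := by
    intro n hn
    rw [Finset.mem_Ico] at hn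
    exact xseq_eq (by omega) (by omega)
  unfold acount
  rw [Finset.range_eq_Ico, ← Finset.Ico_union_Ico_eq_Ico (Nat.zero_le _) hle,
    Finset.filter_union,
    Finset.card_union_of_disjoint
      (Finset.disjoint_filter_filter (Finset.Ico_disjoint_Ico_consecutive _ _ _)),
    ← Finset.range_eq_Ico]
  congr 1
  by_cases hpar : t % 2 = 0
  · rw [if_pos hpar, Finset.filter_true_of_mem, Nat.card_Ico]
    · omega
    · intro n hn; rw [hval n hn]; simpa using hpar
  · rw [if_neg hpar, Finset.filter_false_of_mem, Finset.card_empty]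
    intro n hn; rw [hval n hn]; simpa using hpar

lemma acount_even (s : ℕ) : 3 * acount (2 ^ (2 * s + 1) - 2) = 2 ^ (2 * s + 2) - 4 := by
  induction s with
  | zero => simp [acount]
  | succ n ih =>
    have h1 : acount (2 ^ (2 * n + 2) - 2) = acount (2 ^ (2 * n + 1) - 2) := by
      have := acount_step (2 * n + 1) (by omega)
      simpa [Nat.add_mod] using this
    have h2 : acount (2 ^ (2 * n + 3) - 2)
        = acount (2 ^ (2 * n + 2) - 2) + 2 ^ (2 * n + 2) := by
      have := acount_step (2 * n + 2) (by omega)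
      simpa [Nat.add_mod] using this
    have e1 : 2 * (n + 1) + 1 = 2 * n + 3 := by ring
    have e2 : 2 * (n + 1) + 2 = 2 * n + 4 := by ring
    have e3 : 2 ^ (2 * n + 4) = 4 * 2 ^ (2 * n + 2) := by ring
    have e4 : (4 : ℕ) ≤ 2 ^ (2 * n + 2) := by
      calc (4 : ℕ) = 2 ^ 2 := rfl
      _ ≤ 2 ^ (2 * n + 2) := Nat.pow_le_pow_right (by norm_num) (by omega)
    rw [e1, e2, h2, h1]
    omega

lemma acount_odd (s : ℕ) : 3 * acount (2 ^ (2 * s + 2) - 2) = 2 ^ (2 * s + 2) - 4 := by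
  have h1 : acount (2 ^ (2 * s + 2) - 2) = acount (2 ^ (2 * s + 1) - 2) := by
    have := acount_step (2 * s + 1) (by omega)
    simpa [Nat.add_mod] using this
  rw [h1, acount_even]

lemma cyl_measurable {k : ℕ} (ω : Fin k → Bool) : MeasurableSet (cyl ω) := by
  have : cyl ω = ⋂ i : Fin k, (fun x : ℕ → Bool => x (i : ℕ)) ⁻¹' {ω i} := by
    ext x; simp [cyl]
  rw [this]
  exact MeasurableSet.iInter fun i =>
    (measurable_pi_apply (i : ℕ)) (MeasurableSet.singleton (ω i))

theorem divergence_rate_may_not_exist (μ ν : Measure (ℕ → Bool))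
    [IsProbabilityMeasure μ] [IsProbabilityMeasure ν] (p : ℝ)
    (hp0 : 0 < p) (hp1 : p < 1) (hp : p ≠ 1 / 2)
    (hμ : μ = Measure.dirac xseq)
    (hν : ∀ (k : ℕ) (ω : Fin k → Bool),
      ν (cyl ω) = ENNReal.ofReal (∏ i : Fin k, if ω i then p else 1 - p)) :
    (∀ k : ℕ, div2 μ ν k = ν (cyl (fun i : Fin k => xseq (i : ℕ)))) ∧
      liminf (fun k : ℕ => -(1 / (k : ℝ)) * Real.log (div2 μ ν k).toReal) atTop <
        limsup (fun k : ℕ => -(1 / (k : ℝ)) * Real.log (div2 μ ν k).toReal) atTop := by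
  have part1 : ∀ k : ℕ, div2 μ ν k = ν (cyl (fun i : Fin k => xseq (i : ℕ))) := by
    intro k
    unfold div2
    rw [tsum_eq_single (fun i : Fin k => xseq (i : ℕ)) ?_]
    · rw [hμ, Measure.dirac_apply' _ (cyl_measurable _)]
      have hx : xseq ∈ cyl (fun i : Fin k => xseq (i : ℕ)) := fun i => rfl
      simp [Set.indicator_of_mem hx]
    · intro ω hω
      rw [hμ, Measure.dirac_apply' _ (cyl_measurable _)]
      have hx : xseq ∉ cyl ω := fun h => hω (funext fun i => (h i).symm)
      simp [Set.indicator_of_notMem hx]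
  refine ⟨part1, ?_⟩
  set L := Real.log p with hLdef
  set M := Real.log (1 - p) with hMdef
  have h1p : 0 < 1 - p := by linarith
  have hLn : L < 0 := Real.log_neg hp0 hp1
  have hMn : M < 0 := Real.log_neg h1p (by linarith)
  have hLM : L ≠ M := by
    intro h
    have := Real.log_injOn_pos (Set.mem_Ioi.2 hp0) (Set.mem_Ioi.2 h1p) h
    apply hp; linarith
  have hfac : ∀ b : Bool, 0 < (if b then p else 1 - p) := by
    intro b; cases b <;> simp [hp0, h1p]
  set f := fun k : ℕ => -(1 / (k : ℝ)) * Real.log (div2 μ ν k).toReal with hfdef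
  have key : ∀ k : ℕ, Real.log (div2 μ ν k).toReal
      = (acount k : ℝ) * L + ((k : ℝ) - (acount k : ℝ)) * M := by
    intro k
    rw [part1 k, hν k, ENNReal.toReal_ofReal
      (Finset.prod_nonneg fun i _ => (hfac _).le)]
    rw [Real.log_prod (fun i _ => (hfac (xseq i.1)).ne')]
    have h1 : ∀ i : Fin k, Real.log (if xseq (i : ℕ) then p else 1 - p)
        = (if xseq (i : ℕ) then L else M) := by
      intro i; by_cases h : xseq (i : ℕ) <;> simp [h, hLdef, hMdef]
    simp_rw [h1]
    rw [Fin.sum_univ_eq_sum_range (fun n => if xseq n then L else M) k]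
    have h2 : ∀ n, (if xseq n then L else M) = (if xseq n = true then L - M else 0) + M := by
      intro n; by_cases h : xseq n <;> simp [h]
    simp_rw [h2]
    rw [Finset.sum_add_distrib, Finset.sum_const, ← Finset.sum_filter, Finset.sum_const]
    have : (((Finset.range k).filter fun n => xseq n = true).card : ℝ) = (acount k : ℝ) := by
      simp [acount]
    simp only [nsmul_eq_mul, this, Finset.card_range]
    ring
  have hbdd_below : ∀ k : ℕ, 0 ≤ f k := by
    intro k
    simp only [hfdef]
    rw [key k]
    have ha' : (acount k : ℝ) ≤ k := by exact_mod_cast acount_le k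
    have hap : (0 : ℝ) ≤ (acount k : ℝ) := by positivity
    have h1 : (acount k : ℝ) * L ≤ 0 := mul_nonpos_of_nonneg_of_nonpos hap hLn.le
    have h2 : ((k : ℝ) - acount k) * M ≤ 0 :=
      mul_nonpos_of_nonneg_of_nonpos (by linarith) hMn.le
    have h3 : (0 : ℝ) ≤ 1 / (k : ℝ) := by positivity
    nlinarith
  have hbdd_above : ∀ k : ℕ, f k ≤ max (-L) (-M) := by
    intro k
    have hCpos : (0 : ℝ) < max (-L) (-M) := lt_max_of_lt_left (by linarith)
    simp only [hfdef]
    rw [key k]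
    rcases Nat.eq_zero_or_pos k with hk | hk
    · subst hk
      have h0 : acount 0 = 0 := rfl
      rw [h0]
      norm_num
      exact Or.inl hLn.le
    · have hk0 : (0 : ℝ) < k := by exact_mod_cast hk
      have ha' : (acount k : ℝ) ≤ k := by exact_mod_cast acount_le k
      have hap : (0 : ℝ) ≤ (acount k : ℝ) := by positivity
      have hCL : -L ≤ max (-L) (-M) := le_max_left _ _
      have hCM : -M ≤ max (-L) (-M) := le_max_right _ _
      have hmain : (acount k : ℝ) * (-L) + ((k : ℝ) - acount k) * (-M)
          ≤ (k : ℝ) * max (-L) (-M) := by nlinarith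
      calc -(1 / (k : ℝ)) * ((acount k : ℝ) * L + ((k : ℝ) - acount k) * M)
          = (1 / (k : ℝ)) * ((acount k : ℝ) * (-L) + ((k : ℝ) - acount k) * (-M)) := by ring
        _ ≤ (1 / (k : ℝ)) * ((k : ℝ) * max (-L) (-M)) :=
            mul_le_mul_of_nonneg_left hmain (by positivity)
        _ = max (-L) (-M) := by field_simp
  -- the two limiting values
  set e1 : ℝ := -((2 / 3) * L + (1 / 3) * M) with he1
  set e2 : ℝ := -((1 / 3) * L + (2 / 3) * M) with he2
  have heven : ∀ s : ℕ, 1 ≤ s → f (2 ^ (2 * s + 1) - 2) = e1 := by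
    intro s hs
    set k := 2 ^ (2 * s + 1) - 2 with hkdef
    have h2k : (2 : ℕ) ≤ 2 ^ (2 * s + 1) := by
      calc (2 : ℕ) = 2 ^ 1 := rfl
      _ ≤ 2 ^ (2 * s + 1) := Nat.pow_le_pow_right (by norm_num) (by omega)
    have h3a : 3 * acount k = 2 * k := by
      have h := acount_even s
      rw [← hkdef] at h
      have hb : (1 : ℕ) ≤ 2 ^ (2 * s) := Nat.one_le_two_pow
      have hq1 : (2 : ℕ) ^ (2 * s + 1) = 2 * 2 ^ (2 * s) := by ring
      have hq2 : (2 : ℕ) ^ (2 * s + 2) = 4 * 2 ^ (2 * s) := by ring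
      omega
    have hk1 : 1 ≤ k := by
      have : (8 : ℕ) = 2 ^ 3 := by norm_num
      have h8 : (8 : ℕ) ≤ 2 ^ (2 * s + 1) := by
        rw [this]; exact Nat.pow_le_pow_right (by norm_num) (by omega)
      omega
    have hk0 : (0 : ℝ) < (k : ℝ) := by exact_mod_cast hk1
    have hareal : (3 : ℝ) * (acount k : ℝ) = 2 * (k : ℝ) := by exact_mod_cast h3a
    have ha : (acount k : ℝ) = 2 * (k : ℝ) / 3 := by linarith
    simp only [hfdef]
    rw [key k, ha, he1]
    field_simp
    ring
  have hodd : ∀ s : ℕ, f (2 ^ (2 * s + 2) - 2)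
      = e2 + (2 / (3 * ((2 ^ (2 * s + 2) - 2 : ℕ) : ℝ))) * (L - M) := by
    intro s
    set k := 2 ^ (2 * s + 2) - 2 with hkdef
    have h4k : (4 : ℕ) ≤ 2 ^ (2 * s + 2) := by
      have : (4 : ℕ) = 2 ^ 2 := by norm_num
      rw [this]; exact Nat.pow_le_pow_right (by norm_num) (by omega)
    have h3a : 3 * acount k + 2 = k := by
      have h := acount_odd s
      rw [← hkdef] at h
      have hb : (1 : ℕ) ≤ 2 ^ (2 * s) := Nat.one_le_two_pow
      have hq1 : (2 : ℕ) ^ (2 * s + 1) = 2 * 2 ^ (2 * s) := by ring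
      have hq2 : (2 : ℕ) ^ (2 * s + 2) = 4 * 2 ^ (2 * s) := by ring
      omega
    have hk1 : 1 ≤ k := by omega
    have hk0 : (0 : ℝ) < (k : ℝ) := by exact_mod_cast hk1
    have hareal : (3 : ℝ) * (acount k : ℝ) + 2 = (k : ℝ) := by exact_mod_cast h3a
    have ha : (acount k : ℝ) = ((k : ℝ) - 2) / 3 := by linarith
    simp only [hfdef]
    rw [key k, ha, he2]
    field_simp
    ring
  have hbb : IsBoundedUnder (· ≥ ·) atTop f := isBoundedUnder_of ⟨0, hbdd_below⟩
  have hba : IsBoundedUnder (· ≤ ·) atTop f := isBoundedUnder_of ⟨max (-L) (-M), hbdd_above⟩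
  have hfr_even : ∃ᶠ k in atTop, f k = e1 := by
    rw [frequently_atTop]
    intro N
    refine ⟨2 ^ (2 * (N + 1) + 1) - 2, ?_, heven (N + 1) (by omega)⟩
    have hN : N < 2 ^ N := Nat.lt_two_pow_self (n := N)
    have h8 : 8 * 2 ^ N ≤ 2 ^ (2 * (N + 1) + 1) := by
      have : 8 * 2 ^ N = 2 ^ (N + 3) := by ring
      rw [this]; exact Nat.pow_le_pow_right (by norm_num) (by omega)
    have h1 : 1 ≤ 2 ^ N := Nat.one_le_two_pow
    omega
  have hfr_odd : ∀ (c : Prop) (P : ℕ → Prop),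
      (∀ s : ℕ, P (2 ^ (2 * s + 2) - 2)) → ∃ᶠ k in atTop, P k := by
    intro _ P hP
    rw [frequently_atTop]
    intro N
    refine ⟨2 ^ (2 * N + 2) - 2, ?_, hP N⟩
    have hN : N < 2 ^ N := Nat.lt_two_pow_self (n := N)
    have h4 : 4 * 2 ^ N ≤ 2 ^ (2 * N + 2) := by
      have : 4 * 2 ^ N = 2 ^ (N + 2) := by ring
      rw [this]; exact Nat.pow_le_pow_right (by norm_num) (by omega)
    have h1 : 1 ≤ 2 ^ N := Nat.one_le_two_pow
    omega
  have hodd_pos : ∀ s : ℕ, (0 : ℝ) < ((2 ^ (2 * s + 2) - 2 : ℕ) : ℝ) := by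
    intro s
    have h4k : (4 : ℕ) ≤ 2 ^ (2 * s + 2) := by
      have : (4 : ℕ) = 2 ^ 2 := by norm_num
      rw [this]; exact Nat.pow_le_pow_right (by norm_num) (by omega)
    have : 1 ≤ 2 ^ (2 * s + 2) - 2 := by omega
    exact_mod_cast this
  rcases lt_or_gt_of_ne hLM with hlt | hgt
  · -- L < M : liminf ≤ e2 < e1 ≤ limsup
    have h12 : e2 < e1 := by rw [he1, he2]; linarith
    have hfr1 : ∃ᶠ k in atTop, f k ≤ e2 := by
      refine hfr_odd True _ fun s => ?_
      rw [hodd s]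
      have hkp := hodd_pos s
      have : (2 / (3 * ((2 ^ (2 * s + 2) - 2 : ℕ) : ℝ))) * (L - M) ≤ 0 :=
        mul_nonpos_of_nonneg_of_nonpos (by positivity) (by linarith)
      linarith
    have hfr2 : ∃ᶠ k in atTop, e1 ≤ f k := hfr_even.mono fun k hk => hk.ge
    calc liminf f atTop ≤ e2 := liminf_le_of_frequently_le hfr1 hbb
      _ < e1 := h12
      _ ≤ limsup f atTop := le_limsup_of_frequently_le hfr2 hba
  · -- M < L : liminf ≤ e1 < e2 ≤ limsup
    have h12 : e1 < e2 := by rw [he1, he2]; linarith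
    have hfr1 : ∃ᶠ k in atTop, f k ≤ e1 := hfr_even.mono fun k hk => hk.le
    have hfr2 : ∃ᶠ k in atTop, e2 ≤ f k := by
      refine hfr_odd True _ fun s => ?_
      rw [hodd s]
      have hkp := hodd_pos s
      have : (0 : ℝ) ≤ (2 / (3 * ((2 ^ (2 * s + 2) - 2 : ℕ) : ℝ))) * (L - M) := by
        apply mul_nonneg (by positivity) (by linarith)
      linarith
    calc liminf f atTop ≤ e1 := liminf_le_of_frequently_le hfr1 hbb
      _ < e2 := h12
      _ ≤ limsup f atTop := le_limsup_of_frequently_le hfr2 hba
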